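/- Let B be a finite type with decidable equality, ex a subset of B, and k ∈ ex. Let β : ℤ[B] → ℤ[B] and Λ : ℤ[B] → ℤ[B] be ℤ-linear maps (β(e_j) for j ∈ ex encodes the exchange datum β(j) in dual-basis coordinates, and Λ encodes the quasi-commutation datum λ). Suppose they are compatible: ⟪β(e_j), Λ(e_b)⟫ = 1 if j = b and = 0 otherwise, for all j ∈ ex and all b ∈ B, where ⟪u,v⟫ = Σ_{b∈B} u(b)·v(b). Set w := β(e_k) and assume w(k) = 0. Let μ_k^+ and E_k^+ be the plus tropical and dual mutation maps built from w, and define the mutated data β' := E_k^+ ∘ β ∘ μ_k^+ and Λ' := μ_k^+ ∘ Λ ∘ E_k^+. Then β' and Λ' are again compatible: ⟪β'(e_j), Λ'(e_b)⟫ = 1 if j = b and = 0 otherwise, for all j ∈ ex and all b ∈ B. (Lemma 4.18 of the paper: the mutated maps μ_kβ and μ_kλ are compatible.) -/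

import Mathlib

/-- The tropical mutation map `μ_k^±`, determined on the standard basis by
`e_b ↦ e_b + u b • e_k` for `b ≠ k` and `e_k ↦ -e_k`, where `u b = [w b]₊` (resp. `[w b]₋`). -/
noncomputable def mutL {B : Type*} [Fintype B] [DecidableEq B] (k : B) (u : B → ℤ) :
    (B →₀ ℤ) →ₗ[ℤ] (B →₀ ℤ) :=
  Finsupp.linearCombination ℤ
    (fun b => if b = k then -(Finsupp.single k 1)
              else Finsupp.single b 1 + u b • Finsupp.single k 1)

/-- The dual mutation map `E_k^±`, determined on the standard basis by `e_b ↦ e_b` for `b ≠ k`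
and `e_k ↦ wp − e_k`, where `wp = [w]₊` (resp. `[w]₋`). -/
noncomputable def mutE {B : Type*} [Fintype B] [DecidableEq B] (k : B) (wp : B →₀ ℤ) :
    (B →₀ ℤ) →ₗ[ℤ] (B →₀ ℤ) :=
  Finsupp.linearCombination ℤ
    (fun b => if b = k then wp - Finsupp.single k 1 else Finsupp.single b 1)

/-- Pointwise positive part `[w]₊` of `w : B →₀ ℤ`. -/
noncomputable def fPos {B : Type*} (w : B →₀ ℤ) : B →₀ ℤ :=
  Finsupp.mapRange (fun n => max n 0) (by simp) w

/-- Pointwise negative part `[w]₋` of `w : B →₀ ℤ`. -/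
noncomputable def fNeg {B : Type*} (w : B →₀ ℤ) : B →₀ ℤ :=
  Finsupp.mapRange (fun n => max (-n) 0) (by simp) w

/-- The standard pairing `⟪u,v⟫ = Σ_b u(b)·v(b)` on `ℤ[B]`. -/
def pairB {B : Type*} [Fintype B] (u v : B →₀ ℤ) : ℤ := ∑ b : B, u b * v b

/-- The bilinear extension `⟨x,y⟩_M = Σ_{b,c} x(b)·M(b,c)·y(c)` of a matrix `M`. -/
def formM {B : Type*} [Fintype B] (M : B → B → ℤ) (x y : B →₀ ℤ) : ℤ :=
  ∑ b : B, ∑ c : B, x b * M b c * y c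

section aux
variable {B : Type*} [Fintype B] [DecidableEq B]

lemma pairB_add_left (x y z : B →₀ ℤ) : pairB (x + y) z = pairB x z + pairB y z := by
  simp [pairB, add_mul, Finset.sum_add_distrib]

lemma pairB_add_right (x y z : B →₀ ℤ) : pairB x (y + z) = pairB x y + pairB x z := by
  simp [pairB, mul_add, Finset.sum_add_distrib]

lemma pairB_smul_left (n : ℤ) (x y : B →₀ ℤ) : pairB (n • x) y = n * pairB x y := by
  simp [pairB, Finset.mul_sum, mul_assoc]

lemma pairB_smul_right (n : ℤ) (x y : B →₀ ℤ) : pairB x (n • y) = n * pairB x y := by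
  simp only [pairB, Finsupp.smul_apply, smul_eq_mul, Finset.mul_sum]
  exact Finset.sum_congr rfl fun i _ => by ring

lemma pairB_neg_left (x y : B →₀ ℤ) : pairB (-x) y = -pairB x y := by
  simp [pairB, Finset.sum_neg_distrib]

lemma pairB_zero_left (y : B →₀ ℤ) : pairB 0 y = 0 := by simp [pairB]
lemma pairB_zero_right (x : B →₀ ℤ) : pairB x 0 = 0 := by simp [pairB]

lemma mutL_single (k : B) (u : B → ℤ) (a : B) (n : ℤ) :
    mutL k u (Finsupp.single a n)
      = n • (if a = k then -(Finsupp.single k 1)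
             else Finsupp.single a 1 + u a • Finsupp.single k 1) := by
  simp [mutL, Finsupp.linearCombination_single]

lemma mutE_single (k : B) (wp : B →₀ ℤ) (a : B) (n : ℤ) :
    mutE k wp (Finsupp.single a n)
      = n • (if a = k then wp - Finsupp.single k 1 else Finsupp.single a 1) := by
  simp [mutE, Finsupp.linearCombination_single]

lemma pair_mutE_mutL (k : B) (w : B →₀ ℤ) (hw : w k = 0) (x y : B →₀ ℤ) :
    pairB (mutE k (fPos w) x) (mutL k (fun c => max (w c) 0) y) = pairB x y := by
  have hfk : fPos w k = 0 := by simp [fPos, Finsupp.mapRange_apply, hw]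
  induction x using Finsupp.induction_linear with
  | zero => simp [pairB]
  | add x1 x2 h1 h2 => simp [map_add, pairB_add_left, h1, h2]
  | single a n =>
    induction y using Finsupp.induction_linear with
    | zero => simp [pairB]
    | add y1 y2 h1 h2 => simp [map_add, pairB_add_right, h1, h2]
    | single b m =>
      rw [mutE_single, mutL_single, pairB_smul_left, pairB_smul_right]
      by_cases ha : a = k <;> by_cases hb : b = k <;>
        subst_vars <;>
        simp_all [pairB, Finsupp.single_apply, fPos, Finsupp.mapRange_apply,
          mul_add, add_mul, sub_mul, mul_sub, Finset.sum_add_distrib,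
          Finset.sum_sub_distrib, ite_mul, mul_ite, Finset.mul_sum, mul_comm] <;>
        simp_all [eq_comm] <;> omega
end aux


/-- Lemma 4.18: if `β` and `Λ` are compatible
(`⟪β(e_j), Λ(e_b)⟫ = δ_{jb}` for `j ∈ ex`, `b ∈ B`), `k ∈ ex`, and `w := β(e_k)` satisfies
`w(k) = 0`, then the mutated data `β' := E_k^+ ∘ β ∘ μ_k^+` and `Λ' := μ_k^+ ∘ Λ ∘ E_k^+`
are again compatible. -/
theorem mutated_beta_lambda_compatible {B : Type*} [Fintype B] [DecidableEq B]
    (ex : Set B) (k : B) (hk : k ∈ ex)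
    (β Λ : (B →₀ ℤ) →ₗ[ℤ] (B →₀ ℤ))
    (hcompat : ∀ j ∈ ex, ∀ b : B,
      pairB (β (Finsupp.single j 1)) (Λ (Finsupp.single b 1)) = if j = b then 1 else 0)
    (w : B →₀ ℤ) (hwdef : w = β (Finsupp.single k 1)) (hw : w k = 0) :
    ∀ j ∈ ex, ∀ b : B,
      pairB (mutE k (fPos w) (β (mutL k (fun c => max (w c) 0) (Finsupp.single j 1))))
            (mutL k (fun c => max (w c) 0) (Λ (mutE k (fPos w) (Finsupp.single b 1))))
        = if j = b then 1 else 0 := by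
  have compat' : ∀ j ∈ ex, ∀ v : B →₀ ℤ,
      pairB (β (Finsupp.single j 1)) (Λ v) = v j := by
    intro j hj v
    induction v using Finsupp.induction_linear with
    | zero => simp [pairB]
    | add v1 v2 h1 h2 => simp [map_add, pairB_add_right, h1, h2]
    | single b m =>
      have : (Finsupp.single b m : B →₀ ℤ) = m • Finsupp.single b 1 := by
        simp [Finsupp.smul_single]
      rw [this, map_smul, pairB_smul_right, hcompat j hj b]
      simp [Finsupp.single_apply, eq_comm]
  intro j hj b
  rw [pair_mutE_mutL k w hw]
  rw [mutL_single, mutE_single, one_smul, one_smul]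
  by_cases hjk : j = k <;> by_cases hbk : b = k <;> simp only [hjk, hbk, if_pos, if_neg,
    ite_true, ite_false] <;> subst_vars
  · rw [map_neg, pairB_neg_left, compat' b hk]
    simp [fPos, Finsupp.mapRange_apply, hw]
  · rw [map_neg, pairB_neg_left, compat' j hj]
    simp [Finsupp.single_apply, hbk, Ne.symm hbk]
  · rw [map_add, map_smul, pairB_add_left, pairB_smul_left, compat' j hj, compat' b hk]
    simp [fPos, Finsupp.mapRange_apply, Finsupp.single_apply, Ne.symm hjk, hw]
  · rw [map_add, map_smul, pairB_add_left, pairB_smul_left, compat' j hj, compat' k hk]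
    simp [Finsupp.single_apply, Ne.symm hbk, eq_comm]
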